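/- Let M = P + εD ∈ 𝔻ℍ[t] such that ∏ᵢ Nᵢ^{nᵢ−1} divides P·conj(D) + D·conj(P), where N(P) = ∏ᵢ Nᵢ^{nᵢ} with Nᵢ coprime irreducible real quadratics. Then for every x₀ ∈ ℝ and pure quaternion x, the real polynomial N(P x conj(P) + x₀(P·conj(D) − D·conj(P))) is divisible by ∏_{i : nᵢ > 1} Nᵢ^{nᵢ}. -/

import Mathlib

open Polynomial TrivSqZeroExt Quaternion

noncomputable section

/-- the ring of dual numbers 𝔻 = ℝ[ε]/⟨ε²⟩ -/
abbrev DD : Type := DualNumber ℝ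
/-- the Hamiltonian quaternions ℍ -/
abbrev HH : Type := Quaternion ℝ
/-- the dual quaternions 𝔻ℍ, realized as quaternions over the dual numbers -/
abbrev DH : Type := Quaternion DD

/-- embedding of the real quaternions into the dual quaternions -/
def ofQ (p : HH) : DH := ⟨inl p.re, inl p.imI, inl p.imJ, inl p.imK⟩

/-- ε as a dual quaternion -/
def εq : DH := ((DualNumber.eps : DD) : DH)

/-- primal part of a dual quaternion -/
def primal (q : DH) : HH := ⟨(q.re).fst, (q.imI).fst, (q.imJ).fst, (q.imK).fst⟩

/-- dual part of a dual quaternion -/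
def dualPart (q : DH) : HH := ⟨(q.re).snd, (q.imI).snd, (q.imJ).snd, (q.imK).snd⟩

/-- coefficientwise conjugate of a dual quaternion polynomial -/
def pconj (M : Polynomial DH) : Polynomial DH := ∑ i ∈ M.support, C (star (M.coeff i)) * X ^ i

/-- coefficientwise conjugate of a quaternion polynomial -/
def qpconj (P : Polynomial HH) : Polynomial HH := ∑ i ∈ P.support, C (star (P.coeff i)) * X ^ i

/-- primal part of a dual quaternion polynomial -/
def Ppart (M : Polynomial DH) : Polynomial HH := ∑ i ∈ M.support, C (primal (M.coeff i)) * X ^ i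

/-- dual part of a dual quaternion polynomial -/
def Dpart (M : Polynomial DH) : Polynomial HH := ∑ i ∈ M.support, C (dualPart (M.coeff i)) * X ^ i

/-- primal part of a dual number polynomial -/
def dpr (p : Polynomial DD) : Polynomial ℝ := ∑ i ∈ p.support, C ((p.coeff i).fst) * X ^ i

/-- the dual number polynomial f + εg built from two real polynomials -/
def dpoly (f g : Polynomial ℝ) : Polynomial DD :=
  f.map (algebraMap ℝ DD) + (DualNumber.eps : DD) • g.map (algebraMap ℝ DD)

/-- embedding of quaternion polynomials into dual quaternion polynomials -/
def toDQp (P : Polynomial HH) : Polynomial DH := ∑ i ∈ P.support, C (ofQ (P.coeff i)) * X ^ i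

/-- the quaternion unit i -/
def qi : HH := ⟨0, 1, 0, 0⟩
/-- the quaternion unit j -/
def qj : HH := ⟨0, 0, 1, 0⟩
/-- the quaternion unit k -/
def qk : HH := ⟨0, 0, 0, 1⟩


lemma qpconj_coeff (f : Polynomial HH) (k : ℕ) : (qpconj f).coeff k = star (f.coeff k) := by
  rw [qpconj, finset_sum_coeff]
  simp only [coeff_C_mul, coeff_X_pow, mul_ite, mul_one, mul_zero]
  rw [Finset.sum_ite_eq f.support k (fun i => star (f.coeff i))]
  by_cases h : k ∈ f.support
  · simp [h]
  · simp [h, Polynomial.notMem_support_iff.mp h]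

lemma qpconj_add (f g : Polynomial HH) : qpconj (f + g) = qpconj f + qpconj g :=
  Polynomial.ext fun k => by simp [qpconj_coeff]

lemma qpconj_mul (f g : Polynomial HH) : qpconj (f * g) = qpconj g * qpconj f :=
  Polynomial.ext fun k => by
    rw [qpconj_coeff, coeff_mul, coeff_mul, star_sum]
    rw [← Finset.HasAntidiagonal.map_prodComm_antidiagonal (n := k), Finset.sum_map]
    simp [qpconj_coeff]

lemma qpconj_qpconj (f : Polynomial HH) : qpconj (qpconj f) = f :=
  Polynomial.ext fun k => by simp [qpconj_coeff]

lemma qpconj_neg (f : Polynomial HH) : qpconj (-f) = - qpconj f :=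
  Polynomial.ext fun k => by simp [qpconj_coeff]

lemma qpconj_sub (f g : Polynomial HH) : qpconj (f - g) = qpconj f - qpconj g :=
  Polynomial.ext fun k => by simp [qpconj_coeff, sub_eq_add_neg]

lemma qpconj_C (a : HH) : qpconj (C a) = C (star a) :=
  Polynomial.ext fun k => by simp [qpconj_coeff, coeff_C, apply_ite star]

lemma qpconj_map (g : Polynomial ℝ) : qpconj (g.map (algebraMap ℝ HH)) = g.map (algebraMap ℝ HH) :=
  Polynomial.ext fun k => by
    simp [qpconj_coeff, coeff_map]

lemma qpconj_smul (r : ℝ) (f : Polynomial HH) : qpconj (r • f) = r • qpconj f :=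
  Polynomial.ext fun k => by simp [qpconj_coeff, coeff_smul, Quaternion.star_smul]

lemma map_comm (g : Polynomial ℝ) (f : Polynomial HH) :
    g.map (algebraMap ℝ HH) * f = f * g.map (algebraMap ℝ HH) :=
  Polynomial.ext fun k => by
    rw [coeff_mul, coeff_mul]
    conv_rhs => rw [← Finset.HasAntidiagonal.map_prodComm_antidiagonal (n := k), Finset.sum_map]
    refine Finset.sum_congr rfl fun p _ => ?_
    simp only [Equiv.coe_toEmbedding, Equiv.prodComm_apply, Prod.fst_swap, Prod.snd_swap,
      coeff_map, Quaternion.algebraMap_def]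
    exact Quaternion.coe_commutes _ _

lemma exists_real (f : Polynomial HH) (h : qpconj f = f) :
    ∃ g : Polynomial ℝ, f = g.map (algebraMap ℝ HH) := by
  refine ⟨∑ i ∈ f.support, Polynomial.C ((f.coeff i).re) * X ^ i, Polynomial.ext fun k => ?_⟩
  have hk : star (f.coeff k) = f.coeff k := by rw [← qpconj_coeff, h]
  have hre : f.coeff k = ((f.coeff k).re : HH) := QuaternionAlgebra.star_eq_self.mp hk
  rw [coeff_map, finset_sum_coeff]
  simp only [coeff_C_mul, coeff_X_pow, mul_ite, mul_one, mul_zero, coeff_C]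
  rw [Finset.sum_ite_eq f.support k (fun i => (f.coeff i).re)]
  by_cases hs : k ∈ f.support
  · simpa [hs] using hre
  · simp [hs, Polynomial.notMem_support_iff.mp hs]

lemma qpconj_zero : qpconj (0 : Polynomial HH) = 0 :=
  Polynomial.ext fun k => by simp [qpconj_coeff]

lemma central_pull (g : Polynomial ℝ) (u v : Polynomial HH) :
    u * (g.map (algebraMap ℝ HH) * v) = g.map (algebraMap ℝ HH) * (u * v) := by
  rw [← mul_assoc, ← map_comm, mul_assoc]

lemma mul_qpconj_comm (f : Polynomial HH) : qpconj f * f = f * qpconj f := by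
  rcases eq_or_ne f 0 with rfl | hf
  · rw [qpconj_zero]
  · have hself : qpconj (f * qpconj f) = f * qpconj f := by rw [qpconj_mul, qpconj_qpconj]
    obtain ⟨g, hg⟩ := exists_real _ hself
    refine mul_left_cancel₀ hf ?_
    calc f * (qpconj f * f) = (f * qpconj f) * f := (mul_assoc _ _ _).symm
      _ = f * (f * qpconj f) := by rw [hg, map_comm]

lemma dvd_mapmul_left {g h : Polynomial ℝ} (hd : g ∣ h) (u : Polynomial HH) :
    g.map (algebraMap ℝ HH) ∣ h.map (algebraMap ℝ HH) * u := by
  obtain ⟨k, rfl⟩ := hd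
  exact ⟨k.map (algebraMap ℝ HH) * u, by rw [Polynomial.map_mul, mul_assoc]⟩

lemma dvd_mapmul_right {g h : Polynomial ℝ} (hd : g ∣ h) (u : Polynomial HH) :
    g.map (algebraMap ℝ HH) ∣ u * h.map (algebraMap ℝ HH) := by
  rw [← map_comm]; exact dvd_mapmul_left hd u

lemma dvd_centr {g c' : Polynomial ℝ} {v : Polynomial HH}
    (h : g.map (algebraMap ℝ HH) ∣ v) :
    g.map (algebraMap ℝ HH) ∣ c'.map (algebraMap ℝ HH) * v := by
  obtain ⟨w, rfl⟩ := h
  exact ⟨c'.map (algebraMap ℝ HH) * w, by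
    rw [← mul_assoc, ← Polynomial.map_mul, mul_comm c' g, Polynomial.map_mul, mul_assoc]⟩

/-- If ∏ Nᵢ^{nᵢ−1} divides P·conj(D) + D·conj(P), then for every point x₀ + εx the norm of the
dual part of its trajectory is divisible by ∏_{nᵢ>1} Nᵢ^{nᵢ}. -/
theorem stmt18 (P D : Polynomial HH) (m : ℕ) (N : Fin m → Polynomial ℝ) (n : Fin m → ℕ)
    (hmon : ∀ i, (N i).Monic) (hirr : ∀ i, Irreducible (N i)) (hdeg : ∀ i, (N i).degree = 2)
    (hcop : ∀ i j, i ≠ j → IsCoprime (N i) (N j)) (hn : ∀ i, 0 < n i)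
    (hNP : P * qpconj P = (∏ i, N i ^ n i).map (algebraMap ℝ HH))
    (hdvd : (∏ i, N i ^ (n i - 1)).map (algebraMap ℝ HH) ∣ (P * qpconj D + D * qpconj P)) :
    ∀ (x₀ : ℝ) (x : HH), x.re = 0 →
      (∏ i ∈ Finset.univ.filter (fun i => 1 < n i), N i ^ n i).map (algebraMap ℝ HH) ∣
        ((P * C x * qpconj P + x₀ • (P * qpconj D - D * qpconj P)) *
          qpconj (P * C x * qpconj P + x₀ • (P * qpconj D - D * qpconj P))) := by
  intro x₀ x hx
  set Nn : Polynomial ℝ := ∏ i, N i ^ n i with hNn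
  set R' : Polynomial ℝ := ∏ i, N i ^ (n i - 1) with hR'
  set Q : Polynomial ℝ := ∏ i ∈ Finset.univ.filter (fun i => 1 < n i), N i ^ n i with hQ
  -- real divisibilities
  have hQN : Q ∣ Nn :=
    Finset.prod_dvd_prod_of_subset _ _ (fun i => N i ^ n i) (Finset.filter_subset _ _)
  have hQR2 : Q ∣ R' * R' := by
    have h1 : Q ∣ ∏ i ∈ Finset.univ.filter (fun i => 1 < n i), (N i ^ (n i - 1) * N i ^ (n i - 1)) := by
      refine Finset.prod_dvd_prod_of_dvd _ _ fun i hi => ?_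
      rw [← pow_add]
      exact pow_dvd_pow _ (by have := (Finset.mem_filter.mp hi).2; omega)
    refine h1.trans ?_
    rw [← Finset.prod_mul_distrib]
    exact Finset.prod_dvd_prod_of_subset _ _ _ (Finset.filter_subset _ _)
  -- basic quaternion facts
  have hP0 : P ≠ 0 := by
    intro h
    have hNnm : Nn.Monic := monic_prod_of_monic _ _ fun i _ => (hmon i).pow _
    have := (hNnm.map (algebraMap ℝ HH)).ne_zero
    rw [← hNP, h, zero_mul] at this
    exact this rfl
  have hP'P : qpconj P * P = Nn.map (algebraMap ℝ HH) := by rw [mul_qpconj_comm, hNP]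
  have hD'D : ∃ ND : Polynomial ℝ, qpconj D * D = ND.map (algebraMap ℝ HH) := by
    rw [mul_qpconj_comm]
    exact exists_real _ (by rw [qpconj_mul, qpconj_qpconj])
  obtain ⟨ND, hND⟩ := hD'D
  obtain ⟨w, hw⟩ := hdvd
  have hxs : star x = -x := QuaternionAlgebra.star_eq_neg.mpr hx
  set S : Polynomial HH := P * qpconj D - D * qpconj P with hS
  set C₁ : Polynomial HH := P * C x * qpconj P with hC₁
  set c : Polynomial HH := (Polynomial.C x₀ : Polynomial ℝ).map (algebraMap ℝ HH) with hc
  have hsm : x₀ • S = c * S := by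
    rw [hc, Polynomial.map_C, Algebra.smul_def, Polynomial.algebraMap_apply]
  -- conjugates
  have hqS : qpconj S = -S := by
    rw [hS, qpconj_sub, qpconj_mul, qpconj_mul, qpconj_qpconj, qpconj_qpconj, neg_sub]
  have hqC₁ : qpconj C₁ = -C₁ := by
    rw [hC₁, qpconj_mul, qpconj_mul, qpconj_qpconj, qpconj_C, hxs, Polynomial.C_neg]
    noncomm_ring
  have hqT : qpconj (C₁ + x₀ • S) = -(C₁ + x₀ • S) := by
    rw [qpconj_add, qpconj_smul, hqS, hqC₁, smul_neg, neg_add]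
  rw [hqT, mul_neg, dvd_neg, hsm]
  -- three core divisibilities
  have key1 : (Q.map (algebraMap ℝ HH)) ∣ C₁ * C₁ := by
    have e : C₁ * C₁ = Nn.map (algebraMap ℝ HH) * (P * (C x * (C x * qpconj P))) := by
      calc C₁ * C₁ = P * (C x * ((qpconj P * P) * (C x * qpconj P))) := by rw [hC₁]; noncomm_ring
        _ = P * (C x * (Nn.map (algebraMap ℝ HH) * (C x * qpconj P))) := by rw [hP'P]
        _ = Nn.map (algebraMap ℝ HH) * (P * (C x * (C x * qpconj P))) := by
            rw [central_pull, central_pull]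
    rw [e]; exact dvd_mapmul_left hQN _
  have key2 : (Q.map (algebraMap ℝ HH)) ∣ C₁ * S + S * C₁ := by
    set v : Polynomial HH := qpconj D * (P * C x) - C x * (qpconj P * D) with hv
    have hvs : qpconj v = v := by
      rw [hv, qpconj_sub, qpconj_mul, qpconj_mul, qpconj_mul, qpconj_mul, qpconj_qpconj,
        qpconj_qpconj, qpconj_C, hxs, Polynomial.C_neg]
      noncomm_ring
    obtain ⟨g2, hg2⟩ := exists_real v hvs
    have e : C₁ * S + S * C₁ =
        Nn.map (algebraMap ℝ HH) * (P * (C x * qpconj D))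
          - Nn.map (algebraMap ℝ HH) * (D * (C x * qpconj P))
          + g2.map (algebraMap ℝ HH) * Nn.map (algebraMap ℝ HH) := by
      calc C₁ * S + S * C₁
          = (P * (C x * ((qpconj P * P) * qpconj D)) - D * ((qpconj P * P) * (C x * qpconj P)))
            + P * (v * qpconj P) := by rw [hC₁, hS, hv]; noncomm_ring
        _ = (P * (C x * (Nn.map (algebraMap ℝ HH) * qpconj D))
              - D * (Nn.map (algebraMap ℝ HH) * (C x * qpconj P)))
            + P * (g2.map (algebraMap ℝ HH) * qpconj P) := by rw [hP'P, hg2]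
        _ = _ := by rw [central_pull, central_pull, central_pull, central_pull, hNP]
    rw [e]
    exact dvd_add (dvd_sub (dvd_mapmul_left hQN _) (dvd_mapmul_left hQN _))
      (dvd_mapmul_right hQN _)
  have key3 : (Q.map (algebraMap ℝ HH)) ∣ S * S := by
    have hBB' : P * qpconj D * (D * qpconj P) = ND.map (algebraMap ℝ HH) * Nn.map (algebraMap ℝ HH) := by
      calc P * qpconj D * (D * qpconj P) = P * ((qpconj D * D) * qpconj P) := by noncomm_ring
        _ = P * (ND.map (algebraMap ℝ HH) * qpconj P) := by rw [hND]
        _ = ND.map (algebraMap ℝ HH) * (P * qpconj P) := central_pull _ _ _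
        _ = _ := by rw [hNP]
    have hB'B : D * qpconj P * (P * qpconj D) = Nn.map (algebraMap ℝ HH) * (D * qpconj D) := by
      calc D * qpconj P * (P * qpconj D) = D * ((qpconj P * P) * qpconj D) := by noncomm_ring
        _ = D * (Nn.map (algebraMap ℝ HH) * qpconj D) := by rw [hP'P]
        _ = _ := central_pull _ _ _
    have hAA : (P * qpconj D + D * qpconj P) * (P * qpconj D + D * qpconj P)
        = (R' * R').map (algebraMap ℝ HH) * (w * w) := by
      rw [hw]
      calc R'.map (algebraMap ℝ HH) * w * (R'.map (algebraMap ℝ HH) * w)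
          = R'.map (algebraMap ℝ HH) * (w * (R'.map (algebraMap ℝ HH) * w)) := by rw [mul_assoc]
        _ = R'.map (algebraMap ℝ HH) * (R'.map (algebraMap ℝ HH) * (w * w)) := by rw [central_pull]
        _ = _ := by rw [Polynomial.map_mul, mul_assoc]
    have e : S * S = (P * qpconj D + D * qpconj P) * (P * qpconj D + D * qpconj P)
        - (P * qpconj D * (D * qpconj P) + P * qpconj D * (D * qpconj P)
          + (D * qpconj P * (P * qpconj D) + D * qpconj P * (P * qpconj D))) := by
      rw [hS]; noncomm_ring
    rw [e, hAA, hBB', hB'B]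
    refine dvd_sub (dvd_mapmul_left hQR2 _) ?_
    exact dvd_add (dvd_add (dvd_mapmul_right hQN _) (dvd_mapmul_right hQN _))
      (dvd_add (dvd_mapmul_left hQN _) (dvd_mapmul_left hQN _))
  -- assemble
  have e1 : C₁ * (c * S) = c * (C₁ * S) := central_pull _ _ _
  have e3 : (c * S) * C₁ = c * (S * C₁) := mul_assoc _ _ _
  have e2 : (c * S) * (c * S) = c * (c * (S * S)) := by rw [mul_assoc, central_pull]
  have expand : (C₁ + c * S) * (C₁ + c * S)
      = C₁ * C₁ + (c * (C₁ * S + S * C₁) + c * (c * (S * S))) := by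
    calc (C₁ + c * S) * (C₁ + c * S)
        = C₁ * C₁ + (C₁ * (c * S) + (c * S) * C₁ + (c * S) * (c * S)) := by noncomm_ring
      _ = C₁ * C₁ + (c * (C₁ * S) + c * (S * C₁) + c * (c * (S * S))) := by rw [e1, e2, e3]
      _ = _ := by rw [mul_add]
  rw [expand]
  exact dvd_add key1 (dvd_add (dvd_centr key2) (dvd_centr (dvd_centr key3)))
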